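/- The submodule ℤλ₁ + ℤλ₂ + A₂^⊥ of Λ̃, where A₂^⊥ := {x ∈ Λ̃ : (x.λ₁) = (x.λ₂) = 0}, has index 3 in Λ̃, and the quotient group Λ̃/(ℤλ₁ + ℤλ₂ + A₂^⊥) is cyclic of order 3 generated by the class of e₃ + f₄. -/
import Mathlib


open scoped BigOperators

noncomputable section

/-- The negative definite `E₈` Gram matrix. -/
def E8M : Matrix (Fin 8) (Fin 8) ℤ := - CartanMatrix.E₈

/-- The Gram matrix of the Mukai lattice `Λ̃ = E₈(-1)² ⊕ U₁ ⊕ U₂ ⊕ U₃ ⊕ U₄` on `ℤ²⁴`,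
where the last hyperbolic summand `U₄` carries the sign-changed pairing `(e₄.f₄) = -1`. -/
def gramM : Fin 24 → Fin 24 → ℤ := fun i j =>
  if i.val < 8 ∧ j.val < 8 then
    E8M ⟨i.val % 8, Nat.mod_lt _ (by norm_num)⟩ ⟨j.val % 8, Nat.mod_lt _ (by norm_num)⟩
  else if 8 ≤ i.val ∧ i.val < 16 ∧ 8 ≤ j.val ∧ j.val < 16 then
    E8M ⟨(i.val - 8) % 8, Nat.mod_lt _ (by norm_num)⟩ ⟨(j.val - 8) % 8, Nat.mod_lt _ (by norm_num)⟩
  else if (i.val = 16 ∧ j.val = 17) ∨ (i.val = 17 ∧ j.val = 16) ∨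
      (i.val = 18 ∧ j.val = 19) ∨ (i.val = 19 ∧ j.val = 18) ∨
      (i.val = 20 ∧ j.val = 21) ∨ (i.val = 21 ∧ j.val = 20) then 1
  else if (i.val = 22 ∧ j.val = 23) ∨ (i.val = 23 ∧ j.val = 22) then -1
  else 0

/-- The bilinear (Mukai) form of the lattice `Λ̃`. -/
def MB (x y : Fin 24 → ℤ) : ℤ := ∑ i, ∑ j, gramM i j * x i * y j

/-- `λ₁ = e₄ - f₄`. -/
def l1 : Fin 24 → ℤ := Pi.single 22 1 - Pi.single 23 1

/-- `λ₂ = e₃ + f₃ + f₄`. -/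
def l2 : Fin 24 → ℤ := Pi.single 20 1 + Pi.single 21 1 + Pi.single 23 1

/-- `μ₁ = e₃ - f₃`. -/
def m1 : Fin 24 → ℤ := Pi.single 20 1 - Pi.single 21 1

/-- `μ₂ = -e₃ - e₄ - f₄`. -/
def m2 : Fin 24 → ℤ := -(Pi.single 20 1) - Pi.single 22 1 - Pi.single 23 1

lemma MB_add_left (x y z : Fin 24 → ℤ) : MB (x + y) z = MB x z + MB y z := by
  simp only [MB, Pi.add_apply, ← Finset.sum_add_distrib]
  refine Finset.sum_congr rfl fun i _ => Finset.sum_congr rfl fun j _ => ?_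
  ring

lemma MB_smul_left (c : ℤ) (x y : Fin 24 → ℤ) : MB (c • x) y = c * MB x y := by
  simp only [MB, Finset.mul_sum]
  refine Finset.sum_congr rfl fun i _ => Finset.sum_congr rfl fun j _ => ?_
  simp only [Pi.smul_apply, smul_eq_mul]; ring

/-- The saturation of a submodule. -/
def sat {R M : Type*} [CommRing R] [IsDomain R] [AddCommGroup M] [Module R M]
    (N : Submodule R M) : Submodule R M where
  carrier := {x | ∃ n : R, n ≠ 0 ∧ n • x ∈ N}
  add_mem' := by
    rintro x y ⟨n, hn, hx⟩ ⟨m, hm, hy⟩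
    refine ⟨n * m, mul_ne_zero hn hm, ?_⟩
    have h1 : (n * m) • (x + y) = m • (n • x) + n • (m • y) := by
      rw [smul_add, mul_comm n m, mul_smul, mul_smul, smul_comm m n y]
    rw [h1]
    exact N.add_mem (N.smul_mem m hx) (N.smul_mem n hy)
  zero_mem' := ⟨1, one_ne_zero, by simp⟩
  smul_mem' := by
    rintro c x ⟨n, hn, hx⟩
    exact ⟨n, hn, by rw [smul_comm]; exact N.smul_mem c hx⟩

/-- Isometries of the Mukai lattice `Λ̃`. -/
def IsIsomM (g : (Fin 24 → ℤ) ≃ₗ[ℤ] (Fin 24 → ℤ)) : Prop := ∀ x y, MB (g x) (g y) = MB x y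

end
lemma MB_zero_left (y : Fin 24 → ℤ) : MB 0 y = 0 := by simp [MB]

/-- `A₂^⊥ = {x ∈ Λ̃ : (x.λ₁) = (x.λ₂) = 0}` as a submodule of `Λ̃`. -/
def A2perp : Submodule ℤ (Fin 24 → ℤ) where
  carrier := {x | MB x l1 = 0 ∧ MB x l2 = 0}
  add_mem' := by
    rintro a b ⟨ha1, ha2⟩ ⟨hb1, hb2⟩
    constructor <;> rw [MB_add_left] <;> omega
  zero_mem' := ⟨MB_zero_left _, MB_zero_left _⟩
  smul_mem' := by
    rintro c x ⟨h1, h2⟩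
    exact ⟨by rw [MB_smul_left, h1, mul_zero], by rw [MB_smul_left, h2, mul_zero]⟩
lemma gram_col20 : ∀ i : Fin 24, gramM i 20 = if i = 21 then 1 else 0 := by decide
lemma gram_col21 : ∀ i : Fin 24, gramM i 21 = if i = 20 then 1 else 0 := by decide
lemma gram_col22 : ∀ i : Fin 24, gramM i 22 = if i = 23 then -1 else 0 := by decide
lemma gram_col23 : ∀ i : Fin 24, gramM i 23 = if i = 22 then -1 else 0 := by decide

lemma sum_col20 (x : Fin 24 → ℤ) : ∑ i, gramM i 20 * x i = x 21 := by
  simp [gram_col20, ite_mul, Finset.sum_ite_eq']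
lemma sum_col21 (x : Fin 24 → ℤ) : ∑ i, gramM i 21 * x i = x 20 := by
  simp [gram_col21, ite_mul, Finset.sum_ite_eq']
lemma sum_col22 (x : Fin 24 → ℤ) : ∑ i, gramM i 22 * x i = -x 23 := by
  simp [gram_col22, ite_mul, Finset.sum_ite_eq']
lemma sum_col23 (x : Fin 24 → ℤ) : ∑ i, gramM i 23 * x i = -x 22 := by
  simp [gram_col23, ite_mul, Finset.sum_ite_eq']

lemma MB_single_right (x : Fin 24 → ℤ) (j0 : Fin 24) :
    MB x (Pi.single j0 1) = ∑ i, gramM i j0 * x i := by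
  unfold MB
  refine Finset.sum_congr rfl fun i _ => ?_
  simp [Pi.single_apply, mul_ite, Finset.sum_ite_eq']

lemma MB_l1 (x : Fin 24 → ℤ) : MB x l1 = x 22 - x 23 := by
  have h : l1 = Pi.single 22 1 + (-1 : ℤ) • Pi.single 23 1 := by
    simp [l1, sub_eq_add_neg]
  have hadd : ∀ y z : Fin 24 → ℤ, MB x (y + z) = MB x y + MB x z := by
    intro y z
    simp only [MB, Pi.add_apply, ← Finset.sum_add_distrib]
    refine Finset.sum_congr rfl fun i _ => Finset.sum_congr rfl fun j _ => ?_
    ring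
  have hsmul : ∀ (c : ℤ) (y : Fin 24 → ℤ), MB x (c • y) = c * MB x y := by
    intro c y
    simp only [MB, Finset.mul_sum]
    refine Finset.sum_congr rfl fun i _ => Finset.sum_congr rfl fun j _ => ?_
    simp only [Pi.smul_apply, smul_eq_mul]; ring
  rw [h, hadd, hsmul, MB_single_right, MB_single_right, sum_col22, sum_col23]
  ring

lemma MB_l2 (x : Fin 24 → ℤ) : MB x l2 = x 20 + x 21 - x 22 := by
  have hadd : ∀ y z : Fin 24 → ℤ, MB x (y + z) = MB x y + MB x z := by
    intro y z
    simp only [MB, Pi.add_apply, ← Finset.sum_add_distrib]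
    refine Finset.sum_congr rfl fun i _ => Finset.sum_congr rfl fun j _ => ?_
    ring
  rw [l2, hadd, hadd, MB_single_right, MB_single_right, MB_single_right,
    sum_col20, sum_col21, sum_col23]
  ring

lemma l1_apply : l1 20 = 0 ∧ l1 21 = 0 ∧ l1 22 = 1 ∧ l1 23 = -1 := by
  refine ⟨?_, ?_, ?_, ?_⟩ <;> simp [l1, Pi.single_apply]

lemma l2_apply : l2 20 = 1 ∧ l2 21 = 1 ∧ l2 22 = 0 ∧ l2 23 = 1 := by
  refine ⟨?_, ?_, ?_, ?_⟩ <;> simp [l2, Pi.single_apply]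

lemma mem_N_iff (z : Fin 24 → ℤ) :
    z ∈ Submodule.span ℤ ({l1, l2} : Set (Fin 24 → ℤ)) ⊔ A2perp ↔
      (3 : ℤ) ∣ (z 20 + z 21 + z 22 + z 23) := by
  constructor
  · intro hz
    rcases Submodule.mem_sup.mp hz with ⟨u, hu, v, hv, rfl⟩
    rcases Submodule.mem_span_pair.mp hu with ⟨a, b, rfl⟩
    have hv1 : v 22 - v 23 = 0 := by have := hv.1; rwa [MB_l1] at this
    have hv2 : v 20 + v 21 - v 22 = 0 := by have := hv.2; rwa [MB_l2] at this
    obtain ⟨e0, e1, e2, e3⟩ := l1_apply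
    obtain ⟨f0, f1, f2, f3⟩ := l2_apply
    simp only [Pi.add_apply, Pi.smul_apply, smul_eq_mul, e0, e1, e2, e3, f0, f1, f2, f3]
    refine ⟨b + v 22, by linarith⟩
  · rintro ⟨k, hk⟩
    set a : ℤ := k - z 23 with ha
    set b : ℤ := z 23 - z 22 + 2 * a with hb
    set w : Fin 24 → ℤ := z - a • l1 - b • l2 with hw
    have hwmem : w ∈ A2perp := by
      obtain ⟨e0, e1, e2, e3⟩ := l1_apply
      obtain ⟨f0, f1, f2, f3⟩ := l2_apply
      constructor
      · rw [MB_l1]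
        simp only [hw, Pi.sub_apply, Pi.smul_apply, smul_eq_mul, e2, e3, f2, f3]
        ring
      · rw [MB_l2]
        simp only [hw, Pi.sub_apply, Pi.smul_apply, smul_eq_mul, e0, e1, e2, f0, f1, f2]
        have : z 20 + z 21 + z 22 + z 23 = 3 * k := hk
        linarith
    have hspan : a • l1 + b • l2 ∈ Submodule.span ℤ ({l1, l2} : Set (Fin 24 → ℤ)) :=
      Submodule.mem_span_pair.mpr ⟨a, b, rfl⟩
    have : z = (a • l1 + b • l2) + w := by rw [hw]; abel
    rw [this]
    exact Submodule.mem_sup.mpr ⟨_, hspan, _, hwmem, rfl⟩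

/-- The quotient map `Λ̃ → ℤ/3` with kernel `N`. -/
def phiN : (Fin 24 → ℤ) →+ ZMod 3 where
  toFun z := ((z 20 + z 21 + z 22 + z 23 : ℤ) : ZMod 3)
  map_zero' := by simp
  map_add' x y := by push_cast [Pi.add_apply]; ring

lemma g_apply : (Pi.single 20 1 + Pi.single 23 1 : Fin 24 → ℤ) 20 = 1 ∧
    (Pi.single 20 1 + Pi.single 23 1 : Fin 24 → ℤ) 21 = 0 ∧
    (Pi.single 20 1 + Pi.single 23 1 : Fin 24 → ℤ) 22 = 0 ∧
    (Pi.single 20 1 + Pi.single 23 1 : Fin 24 → ℤ) 23 = 1 := by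
  refine ⟨?_, ?_, ?_, ?_⟩ <;> simp [Pi.single_apply]

/-- `ℤλ₁ + ℤλ₂ + A₂^⊥` has index `3` in `Λ̃`, with quotient cyclic of order `3`
generated by the class of `e₃ + f₄`. -/
theorem stmt_18 :
    ((Submodule.span ℤ ({l1, l2} : Set (Fin 24 → ℤ)) ⊔ A2perp).toAddSubgroup.index = 3) ∧
    (Pi.single 20 1 + Pi.single 23 1 : Fin 24 → ℤ) ∉
      Submodule.span ℤ ({l1, l2} : Set (Fin 24 → ℤ)) ⊔ A2perp ∧
    ∀ z : Fin 24 → ℤ,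
      z ∈ Submodule.span ℤ ({l1, l2} : Set (Fin 24 → ℤ)) ⊔ A2perp ∨
      z - (Pi.single 20 1 + Pi.single 23 1) ∈
        Submodule.span ℤ ({l1, l2} : Set (Fin 24 → ℤ)) ⊔ A2perp ∨
      z - (2 : ℤ) • (Pi.single 20 1 + Pi.single 23 1) ∈
        Submodule.span ℤ ({l1, l2} : Set (Fin 24 → ℤ)) ⊔ A2perp := by
  obtain ⟨g0, g1, g2, g3⟩ := g_apply
  refine ⟨?_, ?_, ?_⟩
  · have hker : (Submodule.span ℤ ({l1, l2} : Set (Fin 24 → ℤ)) ⊔ A2perp).toAddSubgroup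
        = phiN.ker := by
      ext z
      rw [Submodule.mem_toAddSubgroup, mem_N_iff, AddMonoidHom.mem_ker]
      show _ ↔ ((z 20 + z 21 + z 22 + z 23 : ℤ) : ZMod 3) = 0
      rw [ZMod.intCast_zmod_eq_zero_iff_dvd]
      norm_num
    rw [hker, AddSubgroup.index_ker]
    have hsurj : Function.Surjective phiN := by
      intro c
      refine ⟨Pi.single 20 (c.val : ℤ), ?_⟩
      show (((Pi.single 20 (c.val : ℤ) : Fin 24 → ℤ) 20 + _ + _ + _ : ℤ) : ZMod 3) = c
      simp [Pi.single_apply, ZMod.natCast_val, ZMod.intCast_cast, ZMod.cast_id]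
    rw [AddMonoidHom.range_eq_top.mpr hsurj, AddSubgroup.card_top,
      Nat.card_eq_fintype_card, ZMod.card]
  · rw [mem_N_iff, g0, g1, g2, g3]
    omega
  · intro z
    rw [mem_N_iff, mem_N_iff, mem_N_iff]
    simp only [Pi.sub_apply, Pi.smul_apply, smul_eq_mul, Pi.add_apply] at *
    rw [g0, g1, g2, g3]
    omega
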